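/- arXiv:1810.13036 — 2 statements merged into one kernel-verified Lean document; each statement's English description precedes it below -/
import Mathlib

section
/- Let a₁,…,aₙ be positive integers and k, B positive integers with a₁ + ⋯ + aₙ = kB. Let G be the graph obtained from the disjoint union of the flowers F₀ = F(B, k+1) and F_j = F(a_j, k+1) for j ∈ {1,…,n}, with universal vertices y₀, y₁, …, yₙ respectively, by adding the edges y₀y_j for every j ∈ {1,…,n}. Then G admits an equitable (k+1)-coloring if and only if there is a function σ : {1,…,n} → {1,…,k} such that for every i ∈ {1,…,k}, the sum of a_j over all j with σ(j) = i equals B. -/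
/-- A proper `k`-coloring: adjacent vertices receive distinct colors. -/
def IsProperColoring {V : Type*} (G : SimpleGraph V) {k : ℕ} (c : V → Fin k) : Prop :=
  ∀ u v : V, G.Adj u v → c u ≠ c v

/-- An equitable `k`-coloring: proper, and every color class has size `⌊n/k⌋` or `⌈n/k⌉`. -/
def IsEquitableColoring {V : Type*} [Fintype V] (G : SimpleGraph V) {k : ℕ}
    (c : V → Fin k) : Prop :=
  IsProperColoring G c ∧ ∀ i : Fin k,
    (Finset.univ.filter fun v => c v = i).card = Fintype.card V / k ∨
    (Finset.univ.filter fun v => c v = i).card = (Fintype.card V + k - 1) / k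

/-- `G` admits an equitable `k`-coloring. -/
def HasEquitableColoring {V : Type*} [Fintype V] (G : SimpleGraph V) (k : ℕ) : Prop :=
  ∃ c : V → Fin k, IsEquitableColoring G c

/-- The `(a,k)`-flower: `a+1` disjoint cliques of size `k-1` (vertex `some (i, x)` lies in
clique `i`) joined with a universal vertex `none`. -/
def flower (a k : ℕ) : SimpleGraph (Option (Fin (a + 1) × Fin (k - 1))) where
  Adj u v := u ≠ v ∧ ∀ p q, u = some p → v = some q → p.1 = q.1
  symm := ⟨fun _ _ h => ⟨h.1.symm, fun p q hp hq => (h.2 q p hq hp).symm⟩⟩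
  loopless := ⟨fun _ h => h.1 rfl⟩

/-- Disjoint union of an indexed family of graphs: vertices in different summands are
never adjacent, and within a summand adjacency is that of the summand. -/
def disjUnion {n : ℕ} {V : Fin n → Type*} (G : ∀ j, SimpleGraph (V j)) :
    SimpleGraph ((j : Fin n) × V j) where
  Adj u v := ∃ (j : Fin n) (x y : V j), u = ⟨j, x⟩ ∧ v = ⟨j, y⟩ ∧ (G j).Adj x y
  symm := by constructor; rintro u v ⟨j, x, y, rfl, rfl, h⟩; exact ⟨j, y, x, rfl, rfl, h.symm⟩
  loopless := by
    constructor
    rintro u ⟨j, x, y, rfl, h2, h⟩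
    obtain rfl : x = y := by simpa using h2
    exact (G j).loopless.irrefl x h

/-- The graph of Theorem 3 (block graphs): the disjoint union of the flowers
`F₀ = F(B, k+1)` (index `0`) and `F_j = F(a_j, k+1)` for `j ∈ {1,…,n}`, together with the
extra edges `y₀y_j` (`y_j` being the universal vertex `none` of the `j`-th flower). -/
def flowerGraph (n k B : ℕ) (a : Fin n → ℕ) :
    SimpleGraph ((j : Fin (n + 1)) × Option (Fin (Fin.cases B a j + 1) × Fin k)) :=
  disjUnion (fun j => flower (Fin.cases B a j) (k + 1)) ⊔
    SimpleGraph.fromRel fun u v => u.1 = 0 ∧ v.1 ≠ 0 ∧ u.2 = none ∧ v.2 = none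



lemma clique_count {k : ℕ} (f : Fin k → Fin (k + 1)) (hinj : Function.Injective f)
    (p : Fin (k + 1)) (hp : ∀ x, f x ≠ p) (i : Fin (k + 1)) :
    (Finset.univ.filter fun x => f x = i).card = if i = p then 0 else 1 := by
  split_ifs with h
  · subst h
    simp only [Finset.card_eq_zero, Finset.filter_eq_empty_iff]
    exact fun x _ => hp x
  · have himg : Finset.univ.image f = Finset.univ.erase p := by
      apply Finset.eq_of_subset_of_card_le
      · intro y hy
        simp only [Finset.mem_image] at hy
        obtain ⟨x, _, rfl⟩ := hy
        exact Finset.mem_erase.2 ⟨hp x, Finset.mem_univ _⟩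
      · rw [Finset.card_erase_of_mem (Finset.mem_univ p),
          Finset.card_image_of_injective _ hinj]
        simp
    have hi : i ∈ Finset.univ.image f := by
      rw [himg]; exact Finset.mem_erase.2 ⟨h, Finset.mem_univ _⟩
    obtain ⟨x, -, hx⟩ := Finset.mem_image.1 hi
    rw [Finset.card_eq_one]
    refine ⟨x, ?_⟩
    ext y
    simp only [Finset.mem_filter, Finset.mem_univ, true_and, Finset.mem_singleton]
    constructor
    · intro hy; exact hinj (hy.trans hx.symm)
    · rintro rfl; exact hx

lemma adj_clique (n k B : ℕ) (a : Fin n → ℕ) (j : Fin (n + 1))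
    (t : Fin (Fin.cases B a j + 1)) (x y : Fin k) (hxy : x ≠ y) :
    (flowerGraph n k B a).Adj ⟨j, some (t, x)⟩ ⟨j, some (t, y)⟩ := by
  refine Or.inl ⟨j, some (t, x), some (t, y), rfl, rfl, ?_, ?_⟩
  · simp only [ne_eq, Option.some.injEq, Prod.mk.injEq, not_and]
    exact fun _ => hxy
  · intro p q hp hq
    cases Option.some.inj hp
    cases Option.some.inj hq
    rfl

lemma adj_center (n k B : ℕ) (a : Fin n → ℕ) (j : Fin (n + 1))
    (t : Fin (Fin.cases B a j + 1)) (x : Fin k) :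
    (flowerGraph n k B a).Adj ⟨j, some (t, x)⟩ ⟨j, none⟩ := by
  refine Or.inl ⟨j, some (t, x), none, rfl, rfl, ?_, ?_⟩
  · simp
  · intro p q _ hq; exact absurd hq (by simp)

lemma adj_y0 (n k B : ℕ) (a : Fin n → ℕ) (j : Fin n) :
    (flowerGraph n k B a).Adj ⟨0, none⟩ ⟨j.succ, none⟩ := by
  refine Or.inr ⟨?_, Or.inl ⟨rfl, Fin.succ_ne_zero j, rfl, rfl⟩⟩
  intro h
  have := congrArg Sigma.fst h
  exact (Fin.succ_ne_zero j) this.symm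

lemma card_class (n k B : ℕ) (a : Fin n → ℕ)
    (c : ((j : Fin (n + 1)) × Option (Fin (Fin.cases B a j + 1) × Fin k)) → Fin (k + 1))
    (hc : IsProperColoring (flowerGraph n k B a) c) (i : Fin (k + 1)) :
    (Finset.univ.filter fun v => c v = i).card
      = ∑ j : Fin (n + 1), if c ⟨j, none⟩ = i then 1 else (Fin.cases B a j + 1) := by
  rw [Finset.card_filter, ← Finset.univ_sigma_univ, Finset.sum_sigma]
  refine Finset.sum_congr rfl fun j _ => ?_
  rw [Fintype.sum_option]
  have hclique : ∀ t : Fin (Fin.cases B a j + 1),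
      (∑ x : Fin k, if c ⟨j, some (t, x)⟩ = i then 1 else 0)
        = if i = c ⟨j, none⟩ then 0 else 1 := by
    intro t
    rw [← Finset.card_filter]
    apply clique_count (fun x => c ⟨j, some (t, x)⟩)
    · intro x y hxy
      by_contra hne
      exact hc _ _ (adj_clique n k B a j t x y hne) hxy
    · intro x
      exact hc _ _ (adj_center n k B a j t x)
  rw [Fintype.sum_prod_type]
  simp only [hclique]
  rw [Finset.sum_const, Finset.card_univ, Fintype.card_fin]
  by_cases h : c ⟨j, none⟩ = i
  · simp [h, eq_comm]
  · rw [if_neg h, if_neg h, if_neg (fun hh : i = c ⟨j, none⟩ => h hh.symm)]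
    simp

lemma card_V (n k B : ℕ) (a : Fin n → ℕ) (hsum : ∑ j, a j = k * B) :
    Fintype.card ((j : Fin (n + 1)) × Option (Fin (Fin.cases B a j + 1) × Fin k))
      = (k + 1) * (k * B + n + 1) := by
  rw [Fintype.card_sigma]
  simp only [Fintype.card_option, Fintype.card_prod, Fintype.card_fin]
  rw [Fin.sum_univ_succ]
  simp only [Fin.cases_zero, Fin.cases_succ]
  have : ∑ j : Fin n, ((a j + 1) * k + 1) = (∑ j, a j) * k + n * k + n := by
    rw [Finset.sum_add_distrib, ← Finset.sum_mul, Finset.sum_add_distrib,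
      Finset.sum_const, Finset.card_univ, Fintype.card_fin]
    simp only [smul_eq_mul, mul_one]
    ring
  rw [this, hsum]
  ring

lemma flowerGraph_adj (n k B : ℕ) (a : Fin n → ℕ)
    (u v : (j : Fin (n + 1)) × Option (Fin (Fin.cases B a j + 1) × Fin k)) :
    (flowerGraph n k B a).Adj u v ↔
      ((∃ j x y, u = ⟨j, x⟩ ∧ v = ⟨j, y⟩ ∧ (flower (Fin.cases B a j) (k + 1)).Adj x y) ∨
        (u ≠ v ∧ ((u.1 = 0 ∧ v.1 ≠ 0 ∧ u.2 = none ∧ v.2 = none) ∨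
          (v.1 = 0 ∧ u.1 ≠ 0 ∧ v.2 = none ∧ u.2 = none)))) :=
  (SimpleGraph.sup_adj _ _ _ _).trans (or_congr Iff.rfl (SimpleGraph.fromRel_adj _ _ _))

def centerCol {n k : ℕ} (σ : Fin n → Fin k) : Fin (n + 1) → Fin (k + 1) :=
  Fin.cases (Fin.last k) (fun j => (σ j).castSucc)

def mkColoring (n k B : ℕ) (a : Fin n → ℕ) (σ : Fin n → Fin k) :
    ((j : Fin (n + 1)) × Option (Fin (Fin.cases B a j + 1) × Fin k)) → Fin (k + 1)
  | ⟨j, none⟩ => centerCol σ j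
  | ⟨j, some p⟩ => (centerCol σ j).succAbove p.2

lemma mkColoring_proper (n k B : ℕ) (a : Fin n → ℕ) (σ : Fin n → Fin k) :
    IsProperColoring (flowerGraph n k B a) (mkColoring n k B a σ) := by
  intro u v hadj
  rw [flowerGraph_adj] at hadj
  rcases hadj with ⟨j, x, y, rfl, rfl, hne2, hcl⟩ | ⟨hne2, hr | hr⟩
  · rcases x with _ | ⟨t, z⟩ <;> rcases y with _ | ⟨t', z'⟩
    · exact absurd rfl hne2
    · exact Fin.ne_succAbove _ _
    · exact Fin.succAbove_ne _ _
    · have ht : t = t' := hcl (t, z) (t', z') rfl rfl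
      subst ht
      have hz : z ≠ z' := by
        intro h; exact hne2 (by rw [h])
      exact fun h => hz (Fin.succAbove_right_injective h)
  · obtain ⟨ju, xu⟩ := u
    obtain ⟨jv, xv⟩ := v
    obtain ⟨h1, h2, h3, h4⟩ := hr
    dsimp only at h1 h2 h3 h4
    subst h1; subst h3; subst h4
    obtain ⟨j', rfl⟩ : ∃ j' : Fin n, jv = Fin.succ j' :=
      ⟨jv.pred h2, (Fin.succ_pred jv h2).symm⟩
    exact (Fin.castSucc_lt_last (σ j')).ne'
  · obtain ⟨ju, xu⟩ := u
    obtain ⟨jv, xv⟩ := v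
    obtain ⟨h1, h2, h3, h4⟩ := hr
    dsimp only at h1 h2 h3 h4
    subst h1; subst h3; subst h4
    obtain ⟨j', rfl⟩ : ∃ j' : Fin n, ju = Fin.succ j' :=
      ⟨ju.pred h2, (Fin.succ_pred ju h2).symm⟩
    exact (Fin.castSucc_lt_last (σ j')).ne

lemma sum_aj_add_one (n k B : ℕ) (a : Fin n → ℕ) (hsum : ∑ j, a j = k * B) :
    ∑ j : Fin n, (a j + 1) = k * B + n := by
  rw [Finset.sum_add_distrib, hsum, Finset.sum_const, Finset.card_univ,
    Fintype.card_fin, smul_eq_mul, mul_one]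

lemma mkColoring_count (n k B : ℕ) (a : Fin n → ℕ) (σ : Fin n → Fin k)
    (hsum : ∑ j, a j = k * B)
    (hσ : ∀ i : Fin k, ∑ j ∈ Finset.univ.filter (fun j => σ j = i), a j = B)
    (i : Fin (k + 1)) :
    (∑ j : Fin (n + 1),
      if mkColoring n k B a σ ⟨j, none⟩ = i then 1 else (Fin.cases B a j + 1))
      = k * B + n + 1 := by
  rw [Fin.sum_univ_succ]
  show (if Fin.last k = i then 1 else B + 1)
      + (∑ j : Fin n, if (σ j).castSucc = i then 1 else a j + 1) = k * B + n + 1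
  induction i using Fin.lastCases with
  | last =>
    rw [if_pos rfl]
    have h1 : ∑ j : Fin n, (if (σ j).castSucc = Fin.last k then 1 else a j + 1)
        = ∑ j : Fin n, (a j + 1) :=
      Finset.sum_congr rfl fun j _ => if_neg (Fin.castSucc_lt_last (σ j)).ne
    rw [h1, sum_aj_add_one n k B a hsum]
    omega
  | cast i' =>
    rw [if_neg (Fin.castSucc_lt_last i').ne']
    have h0 : ∑ j : Fin n, (if (σ j).castSucc = (i').castSucc then 1 else a j + 1)
        = ∑ j : Fin n, (if σ j = i' then 1 else a j + 1) :=
      Finset.sum_congr rfl fun j _ => by simp only [Fin.castSucc_inj]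
    rw [h0]
    have h1 : ∑ j : Fin n, (if σ j = i' then 1 else a j + 1)
        + ∑ j : Fin n, (if σ j = i' then a j else 0) = ∑ j : Fin n, (a j + 1) := by
      rw [← Finset.sum_add_distrib]
      exact Finset.sum_congr rfl fun j _ => by split_ifs <;> omega
    have h2 : ∑ j : Fin n, (if σ j = i' then a j else 0) = B := by
      rw [← Finset.sum_filter]; exact hσ i'
    have h3 := sum_aj_add_one n k B a hsum
    omega

/-- The flower graph (disjoint flowers `F(B,k+1)`, `F(a_j,k+1)` with the universal vertex of
`F₀` joined to all other universal vertices) admits an equitable `(k+1)`-coloring iff the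
items `a₁,…,aₙ` can be packed into `k` bins each summing exactly `B`. -/
theorem equitable_coloring_flowerGraph_iff_binpacking
    (n k B : ℕ) (a : Fin n → ℕ) (ha : ∀ j, 1 ≤ a j) (hk : 1 ≤ k) (hB : 1 ≤ B)
    (hsum : ∑ j, a j = k * B) :
    HasEquitableColoring (flowerGraph n k B a) (k + 1) ↔
      ∃ σ : Fin n → Fin k, ∀ i : Fin k,
        ∑ j ∈ Finset.univ.filter (fun j => σ j = i), a j = B := by
  have hN := card_V n k B a hsum
  have hdiv1 : Fintype.card
      ((j : Fin (n + 1)) × Option (Fin (Fin.cases B a j + 1) × Fin k)) / (k + 1)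
      = k * B + n + 1 := by
    rw [hN]; exact Nat.mul_div_cancel_left _ (by omega)
  have hdiv2 : (Fintype.card
      ((j : Fin (n + 1)) × Option (Fin (Fin.cases B a j + 1) × Fin k)) + (k + 1) - 1)
      / (k + 1) = k * B + n + 1 := by
    have e : Fintype.card
        ((j : Fin (n + 1)) × Option (Fin (Fin.cases B a j + 1) × Fin k)) + (k + 1) - 1
        = (k + 1) * (k * B + n + 1) + k := by
      rw [hN]; omega
    rw [e, Nat.mul_add_div (by omega), Nat.div_eq_of_lt (by omega), add_zero]
  constructor
  · rintro ⟨c, hprop, hsize⟩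
    have hcard : ∀ i, (Finset.univ.filter fun v => c v = i).card = k * B + n + 1 := by
      intro i
      rcases hsize i with h | h
      · rw [h, hdiv1]
      · rw [h, hdiv2]
    have hne : ∀ j : Fin n, c ⟨j.succ, none⟩ ≠ c ⟨0, none⟩ :=
      fun j h => hprop _ _ (adj_y0 n k B a j) h.symm
    have key : ∀ i : Fin (k + 1), i ≠ c ⟨0, none⟩ →
        ∑ j : Fin n, (if c ⟨j.succ, none⟩ = i then a j else 0) = B := by
      intro i hi
      have H : (if c ⟨0, none⟩ = i then 1 else B + 1)
          + ∑ j : Fin n, (if c ⟨j.succ, none⟩ = i then 1 else a j + 1)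
          = k * B + n + 1 := by
        have h := (card_class n k B a c hprop i).symm.trans (hcard i)
        rw [Fin.sum_univ_succ] at h
        exact h
      rw [if_neg (fun h => hi h.symm)] at H
      have h1 : ∑ j : Fin n, (if c ⟨j.succ, none⟩ = i then 1 else a j + 1)
          + ∑ j : Fin n, (if c ⟨j.succ, none⟩ = i then a j else 0)
          = ∑ j : Fin n, (a j + 1) := by
        rw [← Finset.sum_add_distrib]
        exact Finset.sum_congr rfl fun j _ => by split_ifs <;> omega
      have h3 := sum_aj_add_one n k B a hsum
      omega
    choose σ hσ using fun j => Fin.exists_succAbove_eq (hne j)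
    refine ⟨σ, fun i' => ?_⟩
    rw [Finset.sum_filter]
    rw [← key ((c ⟨0, none⟩).succAbove i') (Fin.succAbove_ne _ i')]
    refine Finset.sum_congr rfl fun j _ => ?_
    have hiff : (σ j = i') ↔ (c ⟨j.succ, none⟩ = (c ⟨0, none⟩).succAbove i') := by
      constructor
      · rintro rfl; exact (hσ j).symm
      · intro h
        exact Fin.succAbove_right_injective ((hσ j).trans h)
    simp only [hiff]
  · rintro ⟨σ, hσ⟩
    refine ⟨mkColoring n k B a σ, mkColoring_proper n k B a σ, fun i => Or.inl ?_⟩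
    rw [card_class n k B a _ (mkColoring_proper n k B a σ) i, hdiv1]
    exact mkColoring_count n k B a σ hsum hσ i
end

section
/- Let a₁,…,aₙ be positive integers and k ≥ 2, B ≥ 1 integers with a₁ + ⋯ + aₙ = kB. Let G be the disjoint union of the trems H(a₁,k), …, H(aₙ,k). Then G admits an equitable k-coloring if and only if there is a function σ : {1,…,n} → {1,…,k} such that for every i ∈ {1,…,k}, the sum of a_j over all j with σ(j) = i equals B. -/
/-- The `(a,k)`-trem: vertices `inl i` (`0`-indexed: `inl i` is `y_{i+1}`), together with
`2a` pairwise disjoint cliques of size `k-1`: `inr (i, false, x)` lies in `Q_{i+1}` and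
`inr (i, true, x)` lies in `Q_{i+1}'`. Each `y_{i+1}` is adjacent to every vertex of
`Q_{i+1}` and `Q_{i+1}'`, and additionally to every vertex of `Q_{i+2}` (when `i+2 ≤ a`). -/
def trem (a k : ℕ) : SimpleGraph (Fin a ⊕ Fin a × Bool × Fin (k - 1)) where
  Adj u v :=
    match u, v with
    | .inl _, .inl _ => False
    | .inl i, .inr (j, b, _) => j = i ∨ (b = false ∧ (j : ℕ) = (i : ℕ) + 1)
    | .inr (j, b, _), .inl i => j = i ∨ (b = false ∧ (j : ℕ) = (i : ℕ) + 1)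
    | .inr (i, b, x), .inr (j, c, y) => i = j ∧ b = c ∧ x ≠ y
  symm := by
    constructor
    rintro (i | ⟨j, b, x⟩) (i' | ⟨j', b', x'⟩) h
    · exact h
    · exact h
    · exact h
    · exact ⟨h.1.symm, h.2.1.symm, h.2.2.symm⟩
  loopless := by
    constructor
    rintro (i | ⟨j, b, x⟩) h
    · exact h
    · exact h.2.2 rfl

lemma clique_count_s9 {m : ℕ} (g : Fin m → Fin (m+1)) (hg : Function.Injective g)
    (s : Fin (m+1)) (hs : ∀ x, g x ≠ s) (i : Fin (m+1)) :
    (∑ x, if g x = i then 1 else 0) = if i = s then 0 else 1 := by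
  split_ifs with h
  · subst h
    exact Finset.sum_eq_zero fun x _ => by simp [hs x]
  · have himg : Finset.image g Finset.univ = Finset.univ.erase s := by
      apply Finset.eq_of_subset_of_card_le
      · intro y hy
        simp only [Finset.mem_image] at hy
        obtain ⟨x, -, rfl⟩ := hy
        exact Finset.mem_erase.2 ⟨hs x, Finset.mem_univ _⟩
      · rw [Finset.card_image_of_injective _ hg]
        simp
    have hi : i ∈ Finset.image g Finset.univ := by
      rw [himg]; exact Finset.mem_erase.2 ⟨h, Finset.mem_univ _⟩
    obtain ⟨x0, -, hx0⟩ := Finset.mem_image.1 hi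
    have : ∀ x : Fin m, (g x = i) = (x = x0) := by
      intro x
      simp only [eq_iff_iff]
      constructor
      · intro hx; exact hg (hx.trans hx0.symm)
      · rintro rfl; exact hx0
    simp only [this]
    simp

lemma aux_two {m : ℕ} (hm : 1 ≤ m) (g : Fin m → Fin (m+1)) (hg : Function.Injective g)
    (A B : Fin (m+1)) (hAB : A ≠ B) (hA : ∀ x, g x ≠ A) (hB : ∀ x, g x ≠ B) : False := by
  have hsub : Finset.image g Finset.univ ⊆ (Finset.univ.erase A).erase B := by
    intro y hy
    simp only [Finset.mem_image] at hy
    obtain ⟨x, -, rfl⟩ := hy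
    exact Finset.mem_erase.2 ⟨hB x, Finset.mem_erase.2 ⟨hA x, Finset.mem_univ _⟩⟩
  have := Finset.card_le_card hsub
  rw [Finset.card_image_of_injective _ hg] at this
  have hBmem : B ∈ Finset.univ.erase A := Finset.mem_erase.2 ⟨Ne.symm hAB, Finset.mem_univ _⟩
  rw [Finset.card_erase_of_mem hBmem, Finset.card_erase_of_mem (Finset.mem_univ _)] at this
  simp at this
  omega

lemma class_card {n m : ℕ} (a : Fin n → ℕ)
    (c : ((j : Fin n) × (Fin (a j) ⊕ Fin (a j) × Bool × Fin m)) → Fin (m+1))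
    (σ : Fin n → Fin (m+1))
    (h1 : ∀ j q, c ⟨j, .inl q⟩ = σ j)
    (h2 : ∀ j q b, Function.Injective fun x => c ⟨j, .inr (q, b, x)⟩)
    (h3 : ∀ j q b x, c ⟨j, .inr (q, b, x)⟩ ≠ σ j)
    (i : Fin (m+1)) :
    (Finset.univ.filter fun v => c v = i).card
      + ∑ j ∈ Finset.univ.filter (fun j => σ j = i), a j = ∑ j, 2 * a j := by
  rw [Finset.card_filter, ← Finset.univ_sigma_univ, Finset.sum_sigma, Finset.sum_filter,
    ← Finset.sum_add_distrib]
  apply Finset.sum_congr rfl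
  intro j _
  rw [Fintype.sum_sum_type]
  have hinl : (∑ q : Fin (a j), if c ⟨j, .inl q⟩ = i then 1 else 0)
      = if σ j = i then a j else 0 := by
    simp [h1]
  have hinr : (∑ p : Fin (a j) × Bool × Fin m, if c ⟨j, .inr p⟩ = i then 1 else 0)
      = if σ j = i then 0 else 2 * a j := by
    rw [Fintype.sum_prod_type]
    have key : ∀ q : Fin (a j), (∑ p : Bool × Fin m, if c ⟨j, .inr (q, p)⟩ = i then 1 else 0)
        = if σ j = i then 0 else 2 := by
      intro q
      rw [Fintype.sum_prod_type, Fintype.sum_bool,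
        clique_count_s9 _ (h2 j q true) (σ j) (h3 j q true) i,
        clique_count_s9 _ (h2 j q false) (σ j) (h3 j q false) i]
      rcases eq_or_ne (σ j) i with h | h
      · simp [h]
      · simp [h, Ne.symm h]
    rw [Finset.sum_congr rfl fun q _ => key q]
    rcases eq_or_ne (σ j) i with h | h <;> simp [h, mul_comm]
  rw [hinl, hinr]
  rcases eq_or_ne (σ j) i with h | h <;> simp [h] <;> ring

/-- The disjoint union of the trems `H(a₁,k), …, H(aₙ,k)` admits an equitable `k`-coloring
iff the items `a₁,…,aₙ` can be packed into `k` bins each summing exactly `B`. -/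
theorem equitable_coloring_disjoint_trems_iff_binpacking
    (n k B : ℕ) (a : Fin n → ℕ) (ha : ∀ j, 1 ≤ a j) (hk : 2 ≤ k) (hB : 1 ≤ B)
    (hsum : ∑ j, a j = k * B) :
    HasEquitableColoring (disjUnion fun j => trem (a j) k) k ↔
      ∃ σ : Fin n → Fin k, ∀ i : Fin k,
        ∑ j ∈ Finset.univ.filter (fun j => σ j = i), a j = B := by
  obtain ⟨m, rfl⟩ : ∃ m, k = m + 1 := ⟨k - 1, by omega⟩
  have hm : 1 ≤ m := by omega
  have hcard : Fintype.card ((j : Fin n) × (Fin (a j) ⊕ Fin (a j) × Bool × Fin (m + 1 - 1)))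
      = (m + 1) * ((2 * m + 1) * B) := by
    rw [Fintype.card_sigma]
    have : ∀ j : Fin n, Fintype.card (Fin (a j) ⊕ Fin (a j) × Bool × Fin (m + 1 - 1))
        = a j * (2 * m + 1) := by
      intro j
      simp [Fintype.card_sum, Fintype.card_prod]
      ring
    rw [Finset.sum_congr rfl fun j _ => this j, ← Finset.sum_mul, hsum]
    ring
  have hdiv : (m + 1) * ((2 * m + 1) * B) / (m + 1) = (2 * m + 1) * B :=
    Nat.mul_div_cancel_left _ (by omega)
  have hceil : ((m + 1) * ((2 * m + 1) * B) + (m + 1) - 1) / (m + 1) = (2 * m + 1) * B := by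
    have h1 : (m + 1) * ((2 * m + 1) * B) + (m + 1) - 1 = (m + 1) * ((2 * m + 1) * B) + m := by
      omega
    rw [h1, Nat.mul_add_div (by omega), Nat.div_eq_of_lt (by omega), Nat.add_zero]
  have h2sum : (∑ j, 2 * a j) = 2 * ((m + 1) * B) := by
    rw [← Finset.mul_sum, hsum]
  constructor
  · rintro ⟨c, hprop, heq⟩
    refine ⟨fun j => c ⟨j, .inl ⟨0, ha j⟩⟩, fun i => ?_⟩
    set σ : Fin n → Fin (m + 1) := fun j => c ⟨j, .inl ⟨0, ha j⟩⟩ with hσdef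
    -- all y-vertices in component j share color σ j
    have h1 : ∀ j (q : Fin (a j)), c ⟨j, .inl q⟩ = σ j := by
      intro j q
      obtain ⟨t, ht⟩ := q
      induction t with
      | zero => rfl
      | succ t ih =>
        have ht' : t < a j := by omega
        rw [← ih ht']
        by_contra hne
        refine aux_two hm (fun x => c ⟨j, .inr (⟨t + 1, ht⟩, false, x)⟩) ?_
          (c ⟨j, .inl ⟨t + 1, ht⟩⟩) (c ⟨j, .inl ⟨t, ht'⟩⟩) hne ?_ ?_
        · intro x y hxy
          by_contra hne'
          exact hprop ⟨j, .inr (⟨t + 1, ht⟩, false, x)⟩ ⟨j, .inr (⟨t + 1, ht⟩, false, y)⟩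
            ⟨j, _, _, rfl, rfl, ⟨rfl, rfl, hne'⟩⟩ hxy
        · intro x
          exact hprop ⟨j, .inr (⟨t + 1, ht⟩, false, x)⟩ ⟨j, .inl ⟨t + 1, ht⟩⟩
            ⟨j, _, _, rfl, rfl, Or.inl rfl⟩
        · intro x
          exact hprop ⟨j, .inr (⟨t + 1, ht⟩, false, x)⟩ ⟨j, .inl ⟨t, ht'⟩⟩
            ⟨j, _, _, rfl, rfl, Or.inr ⟨rfl, rfl⟩⟩
    have h2 : ∀ j (q : Fin (a j)) (b : Bool),
        Function.Injective fun x : Fin m => c ⟨j, .inr (q, b, x)⟩ := by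
      intro j q b x y hxy
      by_contra hne'
      exact hprop ⟨j, .inr (q, b, x)⟩ ⟨j, .inr (q, b, y)⟩
        ⟨j, _, _, rfl, rfl, ⟨rfl, rfl, hne'⟩⟩ hxy
    have h3 : ∀ j (q : Fin (a j)) (b : Bool) (x : Fin m), c ⟨j, .inr (q, b, x)⟩ ≠ σ j := by
      intro j q b x
      rw [← h1 j q]
      exact hprop ⟨j, .inr (q, b, x)⟩ ⟨j, .inl q⟩ ⟨j, _, _, rfl, rfl, Or.inl rfl⟩
    have hcc := class_card a c σ h1 h2 h3 i
    have hSle : (∑ j ∈ Finset.univ.filter (fun j => σ j = i), a j) ≤ (m + 1) * B := by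
      rw [← hsum]
      exact Finset.sum_le_sum_of_subset (Finset.filter_subset _ _)
    have hkey : (2 * m + 1) * B + B = 2 * ((m + 1) * B) := by ring
    rw [h2sum] at hcc
    rcases heq i with hc | hc <;> rw [hcard] at hc
    · rw [hdiv] at hc; omega
    · rw [hceil] at hc; omega
  · rintro ⟨σ, hσ⟩
    set c : ((j : Fin n) × (Fin (a j) ⊕ Fin (a j) × Bool × Fin (m + 1 - 1))) → Fin (m + 1) :=
      fun v => match v with
      | ⟨j, .inl _⟩ => σ j
      | ⟨j, .inr (_, _, x)⟩ => (σ j).succAbove x with hcdef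
    refine ⟨c, ?_, ?_⟩
    · rintro u v ⟨j, x, y, rfl, rfl, hadj⟩
      match x, y with
      | .inl q, .inl q' => exact absurd hadj id
      | .inl q, .inr (q', b, x) =>
        exact fun h => Fin.succAbove_ne (σ j) x h.symm
      | .inr (q', b, x), .inl q =>
        exact Fin.succAbove_ne (σ j) x
      | .inr (q, b, x), .inr (q', b', y) =>
        obtain ⟨rfl, rfl, hne⟩ := hadj
        exact fun h => hne (Fin.succAbove_right_injective h)
    · intro i
      left
      have hcc := class_card a c σ (fun j q => rfl)
        (fun j q b x y hxy => Fin.succAbove_right_injective (p := σ j) hxy)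
        (fun j q b x => Fin.succAbove_ne (σ j) x) i
      rw [hσ i, h2sum] at hcc
      have hkey : (2 * m + 1) * B + B = 2 * ((m + 1) * B) := by ring
      rw [hcard, hdiv]
      omega
end
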